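/- Let n ≥ 2, N = n(n−1)/2, and fix m ≤ N. For graphs G, G' on vertex set [n] with exactly m edges, say G and G' are adjacent if G' = (G \ {e}) ∪ {e'} for some edges e, e' of the complete graph K_n. Given ψ : E(K_n) → ℝ⁺, say f : 𝒢_{n,m} → ℝ is ψ-Lipschitz if |f(G) − f(G')| ≤ ψ(e) + ψ(e') whenever G, G' are adjacent with symmetric difference {e, e'}. Then, for G_m a uniformly random graph with n vertices and m edges, t = m/N, and any ψ-Lipschitz function f, for all a ≥ 0: P(f(G_m) − E[f(G_m)] ≥ a) ≤ exp(−a² / (24·t·‖ψ‖² + 6·a·ψ_max)), where ‖ψ‖² = Σ_{e ∈ E(K_n)} ψ(e)² and ψ_max = max_e ψ(e). -/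

import Mathlib

open Finset



lemma exp_quad {x : ℝ} (hx : |x| ≤ 1) : Real.exp x ≤ 1 + x + x ^ 2 := by
  have h := Real.exp_bound hx (n := 2) (by norm_num)
  have h2 : ∑ m ∈ Finset.range 2, x ^ m / (m.factorial : ℝ) = 1 + x := by
    simp [Finset.sum_range_succ]
  rw [h2] at h
  have h3 : |x| ^ 2 * ((2 : ℕ).succ / ((2:ℕ).factorial * (2:ℕ) : ℝ)) = x ^ 2 * (3/4) := by
    rw [sq_abs]; norm_num
  rw [h3] at h
  have := abs_le.1 h
  nlinarith [sq_nonneg x]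

lemma sum_sq_pair {β : Type*} (s : Finset β) (y : β → ℝ) :
    ∑ e ∈ s, ∑ e' ∈ s, (y e - y e') ^ 2
      = 2 * s.card * (∑ e ∈ s, y e ^ 2) - 2 * (∑ e ∈ s, y e) ^ 2 := by
  have h1 : ∀ e, ∑ e' ∈ s, (y e - y e') ^ 2
      = s.card * y e ^ 2 - 2 * y e * (∑ e' ∈ s, y e') + ∑ e' ∈ s, y e' ^ 2 := by
    intro e
    rw [Finset.sum_congr rfl (fun e' _ => by ring :
      ∀ e' ∈ s, (y e - y e') ^ 2 = y e ^ 2 - 2 * y e * y e' + y e' ^ 2)]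
    rw [Finset.sum_add_distrib, Finset.sum_sub_distrib, Finset.sum_const, ← Finset.mul_sum]
    push_cast; ring
  rw [Finset.sum_congr rfl (fun e _ => h1 e), Finset.sum_add_distrib, Finset.sum_sub_distrib,
    Finset.sum_const, ← Finset.mul_sum, ← Finset.sum_mul, Finset.mul_sum,
    ← Finset.mul_sum, ← Finset.mul_sum]
  ring

namespace Stmt9Aux

variable {α : Type*} [Fintype α] [DecidableEq α]

/-- graphs with `m` edges containing `S` -/
def AA (m : ℕ) (S : Finset α) : Finset (Finset α) :=
  univ.filter (fun G => G.card = m ∧ S ⊆ G)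

lemma mem_AA {m : ℕ} {S G : Finset α} : G ∈ AA m S ↔ G.card = m ∧ S ⊆ G := by
  simp [AA]

lemma AA_nonempty {m : ℕ} {S : Finset α} (hS : S.card ≤ m) (hm : m ≤ Fintype.card α) :
    (AA m S).Nonempty := by
  obtain ⟨t, hst, htc⟩ := Finset.exists_superset_card_eq hS hm
  exact ⟨t, mem_AA.2 ⟨htc, hst⟩⟩

lemma AA_self {m : ℕ} {S : Finset α} (hS : S.card = m) : AA m S = {S} := by
  ext G
  simp only [mem_AA, Finset.mem_singleton]
  constructor
  · rintro ⟨hc, hsub⟩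
    exact (Finset.eq_of_subset_of_card_le hsub (by omega)).symm
  · rintro rfl; exact ⟨hS, le_refl _⟩

lemma AA_insert {m : ℕ} {S : Finset α} {e : α} :
    AA m (insert e S) = (AA m S).filter (fun G => e ∈ G) := by
  ext G
  simp only [mem_AA, Finset.mem_filter, Finset.insert_subset_iff]
  tauto

lemma sum_insert_eq (m : ℕ) (S : Finset α) (w : Finset α → ℝ) :
    ∑ e ∈ Sᶜ, ∑ G ∈ AA m (insert e S), w G
      = ((m - S.card : ℕ) : ℝ) * ∑ G ∈ AA m S, w G := by
  have h1 : ∀ e ∈ Sᶜ, ∑ G ∈ AA m (insert e S), w G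
      = ∑ G ∈ AA m S, (if e ∈ G then w G else 0) := by
    intro e _
    rw [AA_insert, Finset.sum_filter]
  rw [Finset.sum_congr rfl h1, Finset.sum_comm]
  rw [Finset.mul_sum]
  refine Finset.sum_congr rfl (fun G hG => ?_)
  obtain ⟨hGc, hSG⟩ := mem_AA.1 hG
  rw [← Finset.sum_filter]
  have h2 : Sᶜ.filter (fun e => e ∈ G) = G \ S := by
    ext x; simp [Finset.mem_sdiff, and_comm]
  rw [h2, Finset.sum_const, Finset.card_sdiff_of_subset hSG, hGc, nsmul_eq_mul]

section Swap

variable {m : ℕ} {S : Finset α} {e e' : α}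

/-- swap `e` for `e'` -/
def swap (e e' : α) (G : Finset α) : Finset α :=
  if e' ∈ G then G else insert e' (G.erase e)

lemma swap_maps (hee' : e ≠ e') (heS : e ∉ S) (he'S : e' ∉ S) {G : Finset α}
    (hG : G ∈ AA m (insert e S)) : swap e e' G ∈ AA m (insert e' S) := by
  obtain ⟨hGc, hSG⟩ := mem_AA.1 hG
  rw [Finset.insert_subset_iff] at hSG
  obtain ⟨heG, hSG⟩ := hSG
  unfold swap
  by_cases h : e' ∈ G
  · simp only [h, if_true]
    exact mem_AA.2 ⟨hGc, Finset.insert_subset h hSG⟩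
  · simp only [h, if_false]
    refine mem_AA.2 ⟨?_, ?_⟩
    · rw [Finset.card_insert_of_notMem (fun hc => h (Finset.erase_subset _ _ hc)),
        Finset.card_erase_of_mem heG, hGc]
      have : 1 ≤ m := by
        rw [← hGc]; exact Finset.card_pos.2 ⟨e, heG⟩
      omega
    · rw [Finset.insert_subset_iff]
      refine ⟨Finset.mem_insert_self _ _, fun s hs => ?_⟩
      apply Finset.mem_insert_of_mem
      rw [Finset.mem_erase]
      exact ⟨fun hc => heS (hc ▸ hs), hSG hs⟩

lemma swap_swap (hee' : e ≠ e') {G : Finset α}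
    (hG : G ∈ AA m (insert e S)) : swap e' e (swap e e' G) = G := by
  obtain ⟨hGc, hSG⟩ := mem_AA.1 hG
  rw [Finset.insert_subset_iff] at hSG
  obtain ⟨heG, _⟩ := hSG
  unfold swap
  by_cases h : e' ∈ G
  · simp [h, heG]
  · have h2 : e' ∉ G.erase e := fun hc => h (Finset.mem_of_mem_erase hc)
    have h1 : e ∉ insert e' (G.erase e) := by
      rw [Finset.mem_insert]; push_neg
      exact ⟨hee', Finset.notMem_erase e G⟩
    simp only [h, if_false, h1, if_false]
    rw [Finset.erase_insert h2, Finset.insert_erase heG]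

lemma swap_symmDiff (hee' : e ≠ e') {G : Finset α} (hG : G ∈ AA m (insert e S))
    (h : e' ∉ G) : (G \ swap e e' G) ∪ (swap e e' G \ G) = ({e, e'} : Finset α) := by
  obtain ⟨hGc, hSG⟩ := mem_AA.1 hG
  rw [Finset.insert_subset_iff] at hSG
  obtain ⟨heG, _⟩ := hSG
  unfold swap
  simp only [h, if_false]
  ext x
  simp only [Finset.mem_union, Finset.mem_sdiff, Finset.mem_insert, Finset.mem_erase,
    Finset.mem_singleton]
  constructor
  · rintro (⟨hxG, hx⟩ | ⟨hx, hxG⟩)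
    · push_neg at hx
      exact Or.inl (by_contra fun hc => (hx.2 hc) hxG)
    · rcases hx with rfl | ⟨_, hx⟩
      · exact Or.inr rfl
      · exact absurd hx hxG
  · rintro (rfl | rfl)
    · exact Or.inl ⟨heG, by simp [h, hee'.symm, Ne.symm]⟩
    · exact Or.inr ⟨by simp, h⟩

lemma sum_swap_eq (hee' : e ≠ e') (heS : e ∉ S) (he'S : e' ∉ S) (u : Finset α → ℝ) :
    ∑ G ∈ AA m (insert e S), u (swap e e' G) = ∑ G ∈ AA m (insert e' S), u G := by
  refine Finset.sum_nbij' (swap e e') (swap e' e) ?_ ?_ ?_ ?_ ?_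
  · exact fun G hG => swap_maps hee' heS he'S hG
  · exact fun G hG => swap_maps hee'.symm he'S heS hG
  · exact fun G hG => swap_swap hee' hG
  · exact fun G hG => swap_swap hee'.symm hG
  · exact fun G hG => rfl

lemma card_AA_insert_eq (hee' : e ≠ e') (heS : e ∉ S) (he'S : e' ∉ S) :
    (AA m (insert e S)).card = (AA m (insert e' S)).card := by
  have := sum_swap_eq (m := m) (S := S) hee' heS he'S (fun _ => (1 : ℝ))
  simpa using this

lemma sum_diff_le (hee' : e ≠ e') (heS : e ∉ S) (he'S : e' ∉ S)
    (f : Finset α → ℝ) (ψ : α → ℝ) (hψ : ∀ x, 0 < ψ x)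
    (hf : ∀ G G' : Finset α, G.card = m → G'.card = m → ∀ x x' : α,
      (G \ G') ∪ (G' \ G) = ({x, x'} : Finset α) → |f G - f G'| ≤ ψ x + ψ x') :
    |(∑ G ∈ AA m (insert e S), f G) - ∑ G ∈ AA m (insert e' S), f G|
      ≤ ((AA m (insert e S)).card : ℝ) * (ψ e + ψ e') := by
  rw [← sum_swap_eq hee' heS he'S f, ← Finset.sum_sub_distrib]
  refine (Finset.abs_sum_le_sum_abs _ _).trans ?_
  have hb : ∀ G ∈ AA m (insert e S), |f G - f (swap e e' G)| ≤ ψ e + ψ e' := by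
    intro G hG
    by_cases h : e' ∈ G
    · have : swap e e' G = G := by simp [swap, h]
      rw [this, sub_self, abs_zero]
      have := hψ e; have := hψ e'; linarith
    · have h1 : (swap e e' G).card = m :=
        (mem_AA.1 (swap_maps hee' heS he'S hG)).1
      exact hf G (swap e e' G) (mem_AA.1 hG).1 h1 e e' (swap_symmDiff hee' hG h)
  calc ∑ G ∈ AA m (insert e S), |f G - f (swap e e' G)|
      ≤ ∑ _G ∈ AA m (insert e S), (ψ e + ψ e') := Finset.sum_le_sum hb
    _ = ((AA m (insert e S)).card : ℝ) * (ψ e + ψ e') := by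
        rw [Finset.sum_const, nsmul_eq_mul]

end Swap

lemma main_induction (ψ : α → ℝ) (hψ : ∀ x, 0 < ψ x) {m : ℕ} (hm : m ≤ Fintype.card α)
    (f : Finset α → ℝ)
    (hf : ∀ G G' : Finset α, G.card = m → G'.card = m → ∀ x x' : α,
      (G \ G') ∪ (G' \ G) = ({x, x'} : Finset α) → |f G - f G'| ≤ ψ x + ψ x')
    (B : ℝ) (hB : ∀ x, ψ x ≤ B) (L : ℝ) (hL0 : 0 ≤ L) (hL1 : L * (2 * B) ≤ 1) :
    ∀ d : ℕ, ∀ S : Finset α, S.card + d = m →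
      ∑ G ∈ AA m S, Real.exp (L * (f G - (∑ H ∈ AA m S, f H) / ((AA m S).card : ℝ)))
        ≤ ((AA m S).card : ℝ) * Real.exp (L ^ 2 * (2 * (∑ x, ψ x ^ 2) *
            ∑ j ∈ Finset.Ico S.card m, ((Fintype.card α : ℝ) - (j : ℝ))⁻¹)) := by
  intro d
  induction d with
  | zero =>
    intro S hS
    rw [add_zero] at hS
    rw [AA_self hS, hS]
    simp
  | succ d ih =>
    intro S hS
    classical
    set N := Fintype.card α with hN
    set k := S.card with hk
    have hkm : k < m := by omega
    have hkN : k < N := lt_of_lt_of_le hkm hm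
    set Ψ : ℝ := ∑ x, ψ x ^ 2 with hΨ
    have hΨ0 : 0 ≤ Ψ := Finset.sum_nonneg (fun x _ => sq_nonneg _)
    -- basic cardinalities
    have hSc : Sᶜ.card = N - k := by rw [Finset.card_compl]
    have hScpos : 0 < Sᶜ.card := by omega
    obtain ⟨e₀, he₀⟩ := Finset.card_pos.1 hScpos
    have hc0pos : 0 < (AA m S).card := (AA_nonempty (by omega) hm).card_pos
    set c0 : ℝ := ((AA m S).card : ℝ) with hc0
    have hc0pos' : (0:ℝ) < c0 := by rw [hc0]; exact_mod_cast hc0pos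
    set c1 : ℝ := ((AA m (insert e₀ S)).card : ℝ) with hc1
    have hnotmem : ∀ e ∈ Sᶜ, e ∉ S := fun e he => Finset.mem_compl.1 he
    have hcard_ins : ∀ e ∈ Sᶜ, (insert e S).card = k + 1 := by
      intro e he; rw [Finset.card_insert_of_notMem (hnotmem e he)]
    have hc1eq : ∀ e ∈ Sᶜ, ((AA m (insert e S)).card : ℝ) = c1 := by
      intro e he
      by_cases h : e = e₀
      · rw [h]
      · have h2 := card_AA_insert_eq (m := m) h (hnotmem e he) (hnotmem e₀ he₀)
        rw [hc1]; exact_mod_cast h2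
    have hc1pos : (0:ℝ) < c1 := by
      rw [hc1]
      exact_mod_cast (AA_nonempty (by rw [hcard_ins e₀ he₀]; omega) hm).card_pos
    -- conditional expectations
    set g0 : ℝ := (∑ H ∈ AA m S, f H) / c0 with hg0
    set x : α → ℝ := fun e => (∑ G ∈ AA m (insert e S), f G) / c1 with hx
    set n' : ℝ := ((N - k : ℕ) : ℝ) with hn'
    have hn'pos : (0:ℝ) < n' := by rw [hn']; exact_mod_cast Nat.sub_pos_of_lt hkN
    have hmk : ((m - k : ℕ) : ℝ) = (m : ℝ) - (k : ℝ) := by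
      rw [Nat.cast_sub (le_of_lt hkm)]
    have hmkpos : (0:ℝ) < ((m - k : ℕ) : ℝ) := by exact_mod_cast Nat.sub_pos_of_lt hkm
    -- count relation : (m-k) * c0 = n' * c1
    have hcount : ((m - k : ℕ) : ℝ) * c0 = n' * c1 := by
      have h1 := sum_insert_eq m S (fun _ => (1:ℝ))
      rw [← hk] at h1
      simp only [Finset.sum_const, nsmul_eq_mul, mul_one] at h1
      rw [Finset.sum_congr rfl hc1eq] at h1
      rw [Finset.sum_const, nsmul_eq_mul, hSc] at h1
      rw [hc0, ← h1, hn']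
    -- martingale property : ∑ x e = n' * g0
    have hmart : ∑ e ∈ Sᶜ, x e = n' * g0 := by
      have h1 := sum_insert_eq m S f
      rw [← hk] at h1
      have h2 : ∀ e ∈ Sᶜ, ∑ G ∈ AA m (insert e S), f G = c1 * x e := by
        intro e he
        rw [hx]
        show ∑ G ∈ AA m (insert e S), f G = c1 * ((∑ G ∈ AA m (insert e S), f G) / c1)
        rw [mul_comm, div_mul_cancel₀ _ (ne_of_gt hc1pos)]
      rw [Finset.sum_congr rfl h2, ← Finset.mul_sum] at h1
      have hfg : ∑ G ∈ AA m S, f G = c0 * g0 := by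
        rw [hg0, mul_comm, div_mul_cancel₀ _ (ne_of_gt hc0pos')]
      have h3 : c1 * ∑ e ∈ Sᶜ, x e = c1 * (n' * g0) := by
        rw [h1, hfg, ← mul_assoc, hcount]
        ring
      exact mul_left_cancel₀ (ne_of_gt hc1pos) h3
    -- pairwise bound
    have hpair : ∀ e ∈ Sᶜ, ∀ e' ∈ Sᶜ, |x e - x e'| ≤ ψ e + ψ e' := by
      intro e he e' he'
      by_cases h : e = e'
      · rw [h, sub_self, abs_zero]
        have := hψ e; have := hψ e'; linarith
      · have hd := sum_diff_le h (hnotmem e he) (hnotmem e' he') f ψ hψ hf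
        rw [hc1eq e he] at hd
        rw [hx]
        rw [div_sub_div_same, abs_div, abs_of_pos hc1pos, div_le_iff₀ hc1pos]
        calc |(∑ G ∈ AA m (insert e S), f G) - ∑ G ∈ AA m (insert e' S), f G|
            ≤ c1 * (ψ e + ψ e') := hd
          _ = (ψ e + ψ e') * c1 := by ring
    -- deviation bound
    have hdev : ∀ e ∈ Sᶜ, |x e - g0| ≤ 2 * B := by
      intro e he
      have h1 : n' * (x e - g0) = ∑ e' ∈ Sᶜ, (x e - x e') := by
        rw [Finset.sum_sub_distrib, hmart, Finset.sum_const, hSc, hn', nsmul_eq_mul]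
        ring
      have h2 : |n' * (x e - g0)| ≤ n' * (2 * B) := by
        rw [h1]
        refine (Finset.abs_sum_le_sum_abs _ _).trans ?_
        calc ∑ e' ∈ Sᶜ, |x e - x e'| ≤ ∑ e' ∈ Sᶜ, (ψ e + ψ e') :=
              Finset.sum_le_sum (fun e' he' => hpair e he e' he')
          _ ≤ ∑ _e' ∈ Sᶜ, (2 * B) := Finset.sum_le_sum (fun e' _ => by
              have := hB e; have := hB e'; linarith)
          _ = n' * (2 * B) := by rw [Finset.sum_const, hSc, hn', nsmul_eq_mul]
      rw [abs_mul, abs_of_pos hn'pos] at h2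
      exact le_of_mul_le_mul_left h2 hn'pos
    -- variance bound
    have hvar : ∑ e ∈ Sᶜ, (x e - g0) ^ 2 ≤ 2 * Ψ := by
      have hps : ∑ e ∈ Sᶜ, ψ e ^ 2 ≤ Ψ := by
        rw [hΨ]
        exact Finset.sum_le_sum_of_subset_of_nonneg (Finset.subset_univ _)
          (fun x _ _ => sq_nonneg _)
      have hpw : ∑ e ∈ Sᶜ, ∑ e' ∈ Sᶜ, (x e - x e') ^ 2 ≤ 4 * n' * ∑ e ∈ Sᶜ, ψ e ^ 2 := by
        calc ∑ e ∈ Sᶜ, ∑ e' ∈ Sᶜ, (x e - x e') ^ 2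
            ≤ ∑ e ∈ Sᶜ, ∑ e' ∈ Sᶜ, (2 * ψ e ^ 2 + 2 * ψ e' ^ 2) := by
              refine Finset.sum_le_sum (fun e he => Finset.sum_le_sum (fun e' he' => ?_))
              have h1 : |x e - x e'| ≤ ψ e + ψ e' := hpair e he e' he'
              have h2 : (x e - x e') ^ 2 ≤ (ψ e + ψ e') ^ 2 := by
                rw [← sq_abs (x e - x e')]
                apply pow_le_pow_left₀ (abs_nonneg _) h1
              nlinarith [sq_nonneg (ψ e - ψ e')]
          _ = 4 * n' * ∑ e ∈ Sᶜ, ψ e ^ 2 := by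
              simp only [Finset.sum_add_distrib, Finset.sum_const, nsmul_eq_mul, hSc,
                ← Finset.mul_sum, ← hn']
              ring
      have hid := sum_sq_pair Sᶜ x
      rw [hSc] at hid
      -- ∑ (x e - g0)^2 = ∑ x^2 - n' g0^2
      have hexp : ∑ e ∈ Sᶜ, (x e - g0) ^ 2
          = (∑ e ∈ Sᶜ, x e ^ 2) - 2 * g0 * (∑ e ∈ Sᶜ, x e) + n' * g0 ^ 2 := by
        rw [Finset.sum_congr rfl (fun e _ => by ring :
          ∀ e ∈ Sᶜ, (x e - g0) ^ 2 = x e ^ 2 - 2 * g0 * x e + g0 ^ 2)]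
        rw [Finset.sum_add_distrib, Finset.sum_sub_distrib, ← Finset.mul_sum,
          Finset.sum_const, hSc, nsmul_eq_mul, ← hn']
      have h2n' : 2 * n' * (∑ e ∈ Sᶜ, (x e - g0) ^ 2)
          = ∑ e ∈ Sᶜ, ∑ e' ∈ Sᶜ, (x e - x e') ^ 2 := by
        rw [hexp, hid, hmart, hn']
        ring
      nlinarith [hpw, hps, hn'pos]
    -- per-edge inequality from IH
    set v1 : ℝ := L ^ 2 * (2 * Ψ * ∑ j ∈ Finset.Ico (k+1) m, ((N : ℝ) - (j : ℝ))⁻¹) with hv1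
    have hkey : ∀ e ∈ Sᶜ, ∑ G ∈ AA m (insert e S), Real.exp (L * (f G - g0))
        ≤ c1 * Real.exp v1 * Real.exp (L * (x e - g0)) := by
      intro e he
      have hih := ih (insert e S) (by rw [hcard_ins e he]; omega)
      rw [hcard_ins e he] at hih
      have hxe : (∑ H ∈ AA m (insert e S), f H) / ((AA m (insert e S)).card : ℝ) = x e := by
        rw [hx, hc1eq e he]
      rw [hxe, hc1eq e he] at hih
      calc ∑ G ∈ AA m (insert e S), Real.exp (L * (f G - g0))
          = ∑ G ∈ AA m (insert e S),
              Real.exp (L * (f G - x e)) * Real.exp (L * (x e - g0)) := by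
            refine Finset.sum_congr rfl (fun G _ => ?_)
            rw [← Real.exp_add]; ring_nf
        _ = (∑ G ∈ AA m (insert e S), Real.exp (L * (f G - x e)))
              * Real.exp (L * (x e - g0)) := by rw [Finset.sum_mul]
        _ ≤ c1 * Real.exp v1 * Real.exp (L * (x e - g0)) := by
            apply mul_le_mul_of_nonneg_right _ (Real.exp_pos _).le
            rw [hv1]
            exact hih
    -- sum of exponentials bound
    have hsum_exp : ∑ e ∈ Sᶜ, Real.exp (L * (x e - g0))
        ≤ n' * Real.exp (L ^ 2 * (2 * Ψ) / n') := by
      have hq : ∀ e ∈ Sᶜ, Real.exp (L * (x e - g0))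
          ≤ 1 + L * (x e - g0) + (L * (x e - g0)) ^ 2 := by
        intro e he
        refine exp_quad ?_
        rw [abs_mul, abs_of_nonneg hL0]
        calc L * |x e - g0| ≤ L * (2 * B) := by
              refine mul_le_mul_of_nonneg_left (hdev e he) hL0
          _ ≤ 1 := hL1
      calc ∑ e ∈ Sᶜ, Real.exp (L * (x e - g0))
          ≤ ∑ e ∈ Sᶜ, (1 + L * (x e - g0) + (L * (x e - g0)) ^ 2) :=
            Finset.sum_le_sum hq
        _ = n' + L * (∑ e ∈ Sᶜ, (x e - g0)) + L ^ 2 * ∑ e ∈ Sᶜ, (x e - g0) ^ 2 := by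
            simp only [mul_pow, Finset.sum_add_distrib, Finset.sum_const, nsmul_eq_mul,
              hSc, ← hn', ← Finset.mul_sum]
            ring
        _ = n' + L ^ 2 * ∑ e ∈ Sᶜ, (x e - g0) ^ 2 := by
            rw [Finset.sum_sub_distrib, hmart, Finset.sum_const, hSc, nsmul_eq_mul, ← hn']
            ring
        _ ≤ n' + L ^ 2 * (2 * Ψ) := by
            have := mul_le_mul_of_nonneg_left hvar (sq_nonneg L)
            linarith
        _ ≤ n' * Real.exp (L ^ 2 * (2 * Ψ) / n') := by
            have h1 : n' + L ^ 2 * (2 * Ψ) = n' * (L ^ 2 * (2 * Ψ) / n' + 1) := by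
              field_simp
              ring
            rw [h1]
            exact mul_le_mul_of_nonneg_left (Real.add_one_le_exp _) hn'pos.le
    have hn'' : n' = (N : ℝ) - (k : ℝ) := by rw [hn', Nat.cast_sub hkN.le]
    have hsplit : (∑ j ∈ Finset.Ico k m, ((N:ℝ) - (j:ℝ))⁻¹)
        = ((N:ℝ) - (k:ℝ))⁻¹ + ∑ j ∈ Finset.Ico (k+1) m, ((N:ℝ) - (j:ℝ))⁻¹ :=
      Finset.sum_eq_sum_Ico_succ_bot hkm _
    have hmain : ((m - k : ℕ) : ℝ) * ∑ G ∈ AA m S, Real.exp (L * (f G - g0))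
        ≤ ((m - k : ℕ) : ℝ) * (c0 * Real.exp (L ^ 2 * (2 * Ψ *
            ∑ j ∈ Finset.Ico k m, ((N : ℝ) - (j : ℝ))⁻¹))) := by
      calc ((m - k : ℕ) : ℝ) * ∑ G ∈ AA m S, Real.exp (L * (f G - g0))
          = ∑ e ∈ Sᶜ, ∑ G ∈ AA m (insert e S), Real.exp (L * (f G - g0)) := by
            rw [sum_insert_eq m S (fun G => Real.exp (L * (f G - g0))), hk]
        _ ≤ ∑ e ∈ Sᶜ, (c1 * Real.exp v1 * Real.exp (L * (x e - g0))) :=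
            Finset.sum_le_sum hkey
        _ = c1 * Real.exp v1 * ∑ e ∈ Sᶜ, Real.exp (L * (x e - g0)) := by
            rw [← Finset.mul_sum]
        _ ≤ c1 * Real.exp v1 * (n' * Real.exp (L ^ 2 * (2 * Ψ) / n')) := by
            refine mul_le_mul_of_nonneg_left hsum_exp ?_
            exact mul_nonneg hc1pos.le (Real.exp_pos _).le
        _ = (n' * c1) * (Real.exp v1 * Real.exp (L ^ 2 * (2 * Ψ) / n')) := by ring
        _ = ((m - k : ℕ) : ℝ) * (c0 * Real.exp (L ^ 2 * (2 * Ψ *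
              ∑ j ∈ Finset.Ico k m, ((N : ℝ) - (j : ℝ))⁻¹))) := by
            rw [← hcount, ← Real.exp_add, mul_assoc]
            have harg : v1 + L ^ 2 * (2 * Ψ) / n'
                = L ^ 2 * (2 * Ψ * ∑ j ∈ Finset.Ico k m, ((N:ℝ) - (j:ℝ))⁻¹) := by
              rw [hsplit, hv1, hn'', div_eq_mul_inv]
              ring
            rw [harg]
    exact le_of_mul_le_mul_left hmain hmkpos

lemma count_le (ψ : α → ℝ) (hψ : ∀ x, 0 < ψ x) {m : ℕ} (hm : m ≤ Fintype.card α)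
    (f : Finset α → ℝ)
    (hf : ∀ G G' : Finset α, G.card = m → G'.card = m → ∀ x x' : α,
      (G \ G') ∪ (G' \ G) = ({x, x'} : Finset α) → |f G - f G'| ≤ ψ x + ψ x')
    (B : ℝ) (hB : ∀ x, ψ x ≤ B) (L : ℝ) (hL0 : 0 ≤ L) (hL1 : L * (2 * B) ≤ 1) (a : ℝ) :
    (((univ.filter (fun G : Finset α => G.card = m)).filter (fun G => a ≤ f G -
        (∑ H ∈ univ.filter (fun H : Finset α => H.card = m), f H) /
          ((univ.filter (fun H : Finset α => H.card = m)).card : ℝ))).card : ℝ)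
      ≤ ((univ.filter (fun G : Finset α => G.card = m)).card : ℝ) *
        Real.exp (L ^ 2 * (2 * (∑ x, ψ x ^ 2) *
          ∑ j ∈ Finset.range m, ((Fintype.card α : ℝ) - (j : ℝ))⁻¹) - L * a) := by
  classical
  have hAA : AA m (∅ : Finset α) = univ.filter (fun G : Finset α => G.card = m) := by
    ext G; simp [AA]
  have hmi := main_induction ψ hψ hm f hf B hB L hL0 hL1 m ∅ (by simp)
  rw [hAA, Finset.card_empty, ← Finset.range_eq_Ico] at hmi
  set Ω : Finset (Finset α) := univ.filter (fun G : Finset α => G.card = m) with hΩ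
  set Ef : ℝ := (∑ H ∈ Ω, f H) / (Ω.card : ℝ) with hEf
  set V : ℝ := L ^ 2 * (2 * (∑ x, ψ x ^ 2) *
    ∑ j ∈ Finset.range m, ((Fintype.card α : ℝ) - (j : ℝ))⁻¹) with hV
  have hch : ((Ω.filter (fun G => a ≤ f G - Ef)).card : ℝ) * Real.exp (L * a)
      ≤ ∑ G ∈ Ω, Real.exp (L * (f G - Ef)) := by
    calc ((Ω.filter (fun G => a ≤ f G - Ef)).card : ℝ) * Real.exp (L * a)
        = ∑ _G ∈ Ω.filter (fun G => a ≤ f G - Ef), Real.exp (L * a) := by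
          rw [Finset.sum_const, nsmul_eq_mul]
      _ ≤ ∑ G ∈ Ω.filter (fun G => a ≤ f G - Ef), Real.exp (L * (f G - Ef)) := by
          refine Finset.sum_le_sum (fun G hG => ?_)
          have := (Finset.mem_filter.1 hG).2
          exact Real.exp_le_exp.2 (mul_le_mul_of_nonneg_left this hL0)
      _ ≤ ∑ G ∈ Ω, Real.exp (L * (f G - Ef)) :=
          Finset.sum_le_sum_of_subset_of_nonneg (Finset.filter_subset _ _)
            (fun G _ _ => (Real.exp_pos _).le)
  have h2 : ((Ω.filter (fun G => a ≤ f G - Ef)).card : ℝ) * Real.exp (L * a)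
      ≤ (Ω.card : ℝ) * Real.exp V := le_trans hch hmi
  have h3 : ((Ω.filter (fun G => a ≤ f G - Ef)).card : ℝ)
      ≤ (Ω.card : ℝ) * Real.exp V / Real.exp (L * a) := by
    rw [le_div_iff₀ (Real.exp_pos _)]
    exact h2
  calc ((Ω.filter (fun G => a ≤ f G - Ef)).card : ℝ)
      ≤ (Ω.card : ℝ) * Real.exp V / Real.exp (L * a) := h3
    _ = (Ω.card : ℝ) * Real.exp (V - L * a) := by
        rw [Real.exp_sub]; ring

lemma compl_transfer {m : ℕ} (hm : m ≤ Fintype.card α) (w : Finset α → ℝ) :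
    ∑ H ∈ univ.filter (fun H : Finset α => H.card = Fintype.card α - m), w Hᶜ
      = ∑ G ∈ univ.filter (fun G : Finset α => G.card = m), w G := by
  refine Finset.sum_nbij' compl compl ?_ ?_ ?_ ?_ ?_
  · intro H hH
    rw [Finset.mem_filter] at hH ⊢
    refine ⟨Finset.mem_univ _, ?_⟩
    rw [Finset.card_compl, hH.2]
    omega
  · intro G hG
    rw [Finset.mem_filter] at hG ⊢
    refine ⟨Finset.mem_univ _, ?_⟩
    rw [Finset.card_compl, hG.2]
  · intro H _; exact compl_compl H
  · intro G _; exact compl_compl G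
  · intro H _; rfl

lemma count_boole (s : Finset (Finset α)) (p : Finset α → Prop) [DecidablePred p] :
    ((s.filter p).card : ℝ) = ∑ G ∈ s, (if p G then (1:ℝ) else 0) := by
  rw [Finset.sum_boole]

lemma exists_V (ψ : α → ℝ) (hψ : ∀ x, 0 < ψ x) {m : ℕ} (hm : m ≤ Fintype.card α)
    (hm1 : 0 < m)
    (f : Finset α → ℝ)
    (hf : ∀ G G' : Finset α, G.card = m → G'.card = m → ∀ x x' : α,
      (G \ G') ∪ (G' \ G) = ({x, x'} : Finset α) → |f G - f G'| ≤ ψ x + ψ x')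
    (B : ℝ) (hB : ∀ x, ψ x ≤ B) (a : ℝ) :
    ∃ V' : ℝ, 0 ≤ V' ∧
      V' ≤ 6 * ((m : ℝ) / (Fintype.card α : ℝ)) * (∑ x, ψ x ^ 2) ∧
      ∀ L : ℝ, 0 ≤ L → L * (2 * B) ≤ 1 →
        (((univ.filter (fun G : Finset α => G.card = m)).filter (fun G => a ≤ f G -
            (∑ H ∈ univ.filter (fun H : Finset α => H.card = m), f H) /
              ((univ.filter (fun H : Finset α => H.card = m)).card : ℝ))).card : ℝ)
          ≤ ((univ.filter (fun G : Finset α => G.card = m)).card : ℝ) *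
            Real.exp (L ^ 2 * V' - L * a) := by
  classical
  have hN1 : 0 < Fintype.card α := lt_of_lt_of_le hm1 hm
  have hNR : (0:ℝ) < (Fintype.card α : ℝ) := by exact_mod_cast hN1
  have hΨ0 : (0:ℝ) ≤ ∑ x, ψ x ^ 2 := Finset.sum_nonneg (fun x _ => sq_nonneg _)
  by_cases hsplit : 3 * m ≤ 2 * Fintype.card α
  · -- direct case
    refine ⟨2 * (∑ x, ψ x ^ 2) * ∑ j ∈ Finset.range m, ((Fintype.card α : ℝ) - (j:ℝ))⁻¹,
      ?_, ?_, ?_⟩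
    · refine mul_nonneg (by positivity) (Finset.sum_nonneg (fun j hj => ?_))
      have hj := Finset.mem_range.1 hj
      have : (j:ℝ) ≤ (Fintype.card α : ℝ) := by exact_mod_cast le_of_lt (lt_of_lt_of_le hj hm)
      have := sub_nonneg.2 this
      positivity
    · have hterm : ∀ j ∈ Finset.range m, ((Fintype.card α : ℝ) - (j:ℝ))⁻¹
          ≤ 3 / (Fintype.card α : ℝ) := by
        intro j hj
        have hj := Finset.mem_range.1 hj
        have h1 : (0:ℝ) < (Fintype.card α : ℝ) - (j:ℝ) := by
          have : j < Fintype.card α := lt_of_lt_of_le hj hm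
          have : (j:ℝ) < (Fintype.card α : ℝ) := by exact_mod_cast this
          linarith
        have h2 : (Fintype.card α : ℝ) ≤ 3 * ((Fintype.card α : ℝ) - (j:ℝ)) := by
          have hnat : 3 * j + Fintype.card α ≤ 3 * Fintype.card α := by omega
          have : (3 * j + Fintype.card α : ℕ) ≤ (3 * Fintype.card α : ℕ) := hnat
          have := (Nat.cast_le (α := ℝ)).2 this
          push_cast at this
          linarith
        rw [inv_eq_one_div, div_le_div_iff₀ h1 hNR]
        linarith
      have hsum : ∑ j ∈ Finset.range m, ((Fintype.card α : ℝ) - (j:ℝ))⁻¹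
          ≤ (m:ℝ) * (3 / (Fintype.card α : ℝ)) := by
        calc ∑ j ∈ Finset.range m, ((Fintype.card α : ℝ) - (j:ℝ))⁻¹
            ≤ ∑ _j ∈ Finset.range m, 3 / (Fintype.card α : ℝ) := Finset.sum_le_sum hterm
          _ = (m:ℝ) * (3 / (Fintype.card α : ℝ)) := by
              rw [Finset.sum_const, Finset.card_range, nsmul_eq_mul]
      calc 2 * (∑ x, ψ x ^ 2) * ∑ j ∈ Finset.range m, ((Fintype.card α : ℝ) - (j:ℝ))⁻¹
          ≤ 2 * (∑ x, ψ x ^ 2) * ((m:ℝ) * (3 / (Fintype.card α : ℝ))) := by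
            refine mul_le_mul_of_nonneg_left hsum (by positivity)
        _ = 6 * ((m : ℝ) / (Fintype.card α : ℝ)) * (∑ x, ψ x ^ 2) := by
            field_simp
            ring
    · intro L hL0 hL1
      exact count_le ψ hψ hm f hf B hB L hL0 hL1 a
  · -- complement case
    set m' : ℕ := Fintype.card α - m with hm'
    have hm'N : m' ≤ Fintype.card α := by omega
    set f' : Finset α → ℝ := fun H => f Hᶜ with hf'def
    have hf' : ∀ G G' : Finset α, G.card = m' → G'.card = m' → ∀ x x' : α,
        (G \ G') ∪ (G' \ G) = ({x, x'} : Finset α) → |f' G - f' G'| ≤ ψ x + ψ x' := by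
      intro H H' h1 h2 e e' hsym
      refine hf Hᶜ H'ᶜ ?_ ?_ e e' ?_
      · rw [Finset.card_compl, h1]; omega
      · rw [Finset.card_compl, h2]; omega
      · rw [compl_sdiff_compl, compl_sdiff_compl, Finset.union_comm, hsym]
    -- transfers
    have hcards : ((univ.filter (fun H : Finset α => H.card = Fintype.card α - m)).card : ℝ)
        = ((univ.filter (fun G : Finset α => G.card = m)).card : ℝ) := by
      have h := compl_transfer (α := α) hm (fun _ => (1:ℝ))
      simpa using h
    have hsums : (∑ H ∈ univ.filter (fun H : Finset α => H.card = Fintype.card α - m), f' H)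
        = ∑ G ∈ univ.filter (fun G : Finset α => G.card = m), f G :=
      compl_transfer (α := α) hm f
    set Ef : ℝ := (∑ H ∈ univ.filter (fun H : Finset α => H.card = m), f H) /
        ((univ.filter (fun H : Finset α => H.card = m)).card : ℝ) with hEf
    have hEfeq : (∑ H ∈ univ.filter (fun H : Finset α => H.card = m'), f' H) /
        ((univ.filter (fun H : Finset α => H.card = m')).card : ℝ) = Ef := by
      rw [hm', hsums, hcards]
    have hcounts : (((univ.filter (fun H : Finset α => H.card = m')).filter
          (fun H => a ≤ f' H - Ef)).card : ℝ)
        = (((univ.filter (fun G : Finset α => G.card = m)).filter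
          (fun G => a ≤ f G - Ef)).card : ℝ) := by
      rw [count_boole, count_boole]
      rw [hm']
      exact compl_transfer (α := α) hm (fun G => if a ≤ f G - Ef then (1:ℝ) else 0)
    refine ⟨2 * (∑ x, ψ x ^ 2) * ∑ j ∈ Finset.range m', ((Fintype.card α : ℝ) - (j:ℝ))⁻¹,
      ?_, ?_, ?_⟩
    · refine mul_nonneg (by positivity) (Finset.sum_nonneg (fun j hj => ?_))
      have hj := Finset.mem_range.1 hj
      have : (j:ℝ) ≤ (Fintype.card α : ℝ) := by
        exact_mod_cast le_of_lt (lt_of_lt_of_le hj hm'N)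
      have := sub_nonneg.2 this
      positivity
    · have hterm : ∀ j ∈ Finset.range m', ((Fintype.card α : ℝ) - (j:ℝ))⁻¹
          ≤ 1 / ((m:ℝ) + 1) := by
        intro j hj
        have hj := Finset.mem_range.1 hj
        have h0 : (0:ℝ) < (m:ℝ) + 1 := by positivity
        have h1 : ((m:ℝ) + 1) ≤ (Fintype.card α : ℝ) - (j:ℝ) := by
          have hnat : m + 1 + j ≤ Fintype.card α := by omega
          have := (Nat.cast_le (α := ℝ)).2 hnat
          push_cast at this
          linarith
        rw [inv_eq_one_div, div_le_div_iff₀ (by linarith) h0]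
        linarith
      have hsum : ∑ j ∈ Finset.range m', ((Fintype.card α : ℝ) - (j:ℝ))⁻¹
          ≤ (m':ℝ) * (1 / ((m:ℝ) + 1)) := by
        calc ∑ j ∈ Finset.range m', ((Fintype.card α : ℝ) - (j:ℝ))⁻¹
            ≤ ∑ _j ∈ Finset.range m', 1 / ((m:ℝ) + 1) := Finset.sum_le_sum hterm
          _ = (m':ℝ) * (1 / ((m:ℝ) + 1)) := by
              rw [Finset.sum_const, Finset.card_range, nsmul_eq_mul]
      have hkey2 : (m':ℝ) * (1 / ((m:ℝ) + 1)) ≤ 3 * (m:ℝ) / (Fintype.card α : ℝ) := by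
        have hA : 2 * Fintype.card α + 1 ≤ 3 * m := by omega
        have hAR : 2 * (Fintype.card α : ℝ) + 1 ≤ 3 * (m:ℝ) := by exact_mod_cast hA
        have hm'R : (m':ℝ) = (Fintype.card α : ℝ) - (m:ℝ) := by
          rw [hm']; push_cast [Nat.cast_sub hm]; ring
        have hmR : (m:ℝ) ≤ (Fintype.card α : ℝ) := by exact_mod_cast hm
        have h0 : (0:ℝ) < (m:ℝ) + 1 := by positivity
        rw [hm'R, mul_one_div, div_le_div_iff₀ h0 hNR]
        nlinarith [mul_nonneg (by linarith : (0:ℝ) ≤ 3*(m:ℝ) - 2*(Fintype.card α : ℝ) - 1)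
            (by linarith : (0:ℝ) ≤ (m:ℝ) + 1),
          mul_nonneg (by linarith : (0:ℝ) ≤ (Fintype.card α : ℝ) - (m:ℝ)) hNR.le,
          mul_pos hNR hNR, sq_nonneg ((Fintype.card α : ℝ) - (m:ℝ)), sq_nonneg (m:ℝ),
          mul_nonneg (by linarith : (0:ℝ) ≤ 3*(m:ℝ) - 2*(Fintype.card α : ℝ) - 1) hNR.le]
      calc 2 * (∑ x, ψ x ^ 2) * ∑ j ∈ Finset.range m', ((Fintype.card α : ℝ) - (j:ℝ))⁻¹
          ≤ 2 * (∑ x, ψ x ^ 2) * ((m':ℝ) * (1 / ((m:ℝ) + 1))) :=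
            mul_le_mul_of_nonneg_left hsum (by positivity)
        _ ≤ 2 * (∑ x, ψ x ^ 2) * (3 * (m:ℝ) / (Fintype.card α : ℝ)) :=
            mul_le_mul_of_nonneg_left hkey2 (by positivity)
        _ = 6 * ((m : ℝ) / (Fintype.card α : ℝ)) * (∑ x, ψ x ^ 2) := by
            field_simp
            ring
    · intro L hL0 hL1
      have hc := count_le ψ hψ hm'N f' hf' B hB L hL0 hL1 a
      rw [hEfeq] at hc
      rw [hcounts] at hc
      rw [hcards] at hc  -- may need hm' fold
      exact hc

end Stmt9Aux


open scoped BigOperators Classical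

set_option maxHeartbeats 2000000 in
theorem stmt_9 (n m : ℕ) (hn : 2 ≤ n) (hm : m ≤ n * (n - 1) / 2)
    (ψ : {e : Sym2 (Fin n) // ¬ e.IsDiag} → ℝ) (hψ : ∀ e, 0 < ψ e)
    (f : Finset {e : Sym2 (Fin n) // ¬ e.IsDiag} → ℝ)
    (hf : ∀ G G' : Finset {e : Sym2 (Fin n) // ¬ e.IsDiag}, G.card = m → G'.card = m →
      ∀ e e' : {e : Sym2 (Fin n) // ¬ e.IsDiag},
        (G \ G') ∪ (G' \ G) = ({e, e'} : Finset _) → |f G - f G'| ≤ ψ e + ψ e')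
    (a : ℝ) (ha : 0 ≤ a) :
    -- Ω : the set of graphs on [n] with exactly m edges (as edge sets)
    ∀ Ω : Finset (Finset {e : Sym2 (Fin n) // ¬ e.IsDiag}),
      Ω = Finset.univ.filter (fun G => G.card = m) →
    ∀ t : ℝ, t = (m : ℝ) / ((n * (n - 1) / 2 : ℕ) : ℝ) →
    ∀ Ef : ℝ, Ef = (∑ G ∈ Ω, f G) / (Ω.card : ℝ) →
    ((Ω.filter (fun G => a ≤ f G - Ef)).card : ℝ) / (Ω.card : ℝ)
      ≤ Real.exp (-a ^ 2 / (24 * t * (∑ e, ψ e ^ 2) + 6 * a * (⨆ e, ψ e))) := by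
  intro Ω hΩ t ht Ef hEf
  classical
  have hcard : Fintype.card {e : Sym2 (Fin n) // ¬ e.IsDiag} = n * (n - 1) / 2 := by
    rw [Sym2.card_subtype_not_diag, Fintype.card_fin, Nat.choose_two_right]
  have hmN : m ≤ Fintype.card {e : Sym2 (Fin n) // ¬ e.IsDiag} := by rw [hcard]; exact hm
  have he₀ : ∃ e₀ : {e : Sym2 (Fin n) // ¬ e.IsDiag}, True := by
    refine ⟨⟨Sym2.mk (⟨0, by omega⟩ : Fin n) (⟨1, by omega⟩ : Fin n), ?_⟩, trivial⟩
    rw [Sym2.mk_isDiag_iff]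
    intro hcon
    have := congrArg Fin.val hcon
    simp at this
  obtain ⟨e₀, -⟩ := he₀
  obtain ⟨B, hBdef⟩ : ∃ B : ℝ, B = ⨆ e : {e : Sym2 (Fin n) // ¬ e.IsDiag}, ψ e := ⟨_, rfl⟩
  rw [← hBdef]
  have hB : ∀ e : {e : Sym2 (Fin n) // ¬ e.IsDiag}, ψ e ≤ B := by
    rw [hBdef]
    exact fun e => le_ciSup (Set.Finite.bddAbove (Set.finite_range ψ)) e
  have hB0 : (0:ℝ) < B := lt_of_lt_of_le (hψ e₀) (hB e₀)
  obtain ⟨Ψ, hΨdef⟩ : ∃ P : ℝ, P = ∑ e : {e : Sym2 (Fin n) // ¬ e.IsDiag}, ψ e ^ 2 := ⟨_, rfl⟩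
  rw [← hΨdef]
  have hΨ0 : (0:ℝ) < Ψ := by
    rw [hΨdef]
    exact Finset.sum_pos (fun e _ => pow_pos (hψ e) 2) ⟨e₀, Finset.mem_univ _⟩
  have hΩAA : Stmt9Aux.AA m (∅ : Finset {e : Sym2 (Fin n) // ¬ e.IsDiag}) = Ω := by
    rw [hΩ]; ext G; simp [Stmt9Aux.AA]
  have hΩpos : 0 < Ω.card := by
    rw [← hΩAA]
    exact (Stmt9Aux.AA_nonempty (by simp) hmN).card_pos
  have hΩR : (0:ℝ) < (Ω.card : ℝ) := by exact_mod_cast hΩpos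
  have htN : t = (m:ℝ) / (Fintype.card {e : Sym2 (Fin n) // ¬ e.IsDiag} : ℝ) := by rw [ht, hcard]
  have hNR : (0:ℝ) < (Fintype.card {e : Sym2 (Fin n) // ¬ e.IsDiag} : ℝ) := by
    have : 0 < Fintype.card {e : Sym2 (Fin n) // ¬ e.IsDiag} := Fintype.card_pos_iff.2 ⟨e₀⟩
    exact_mod_cast this
  have ht0 : 0 ≤ t := by
    rw [htN]; exact div_nonneg (Nat.cast_nonneg m) hNR.le
  by_cases ha0 : a = 0
  · subst ha0
    norm_num
    rw [div_le_one hΩR]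
    exact_mod_cast Finset.card_filter_le _ _
  have ha' : 0 < a := lt_of_le_of_ne ha (Ne.symm ha0)
  by_cases hm0 : m = 0
  · subst hm0
    have hΩ0 : Ω = {(∅ : Finset {e : Sym2 (Fin n) // ¬ e.IsDiag})} := by
      rw [hΩ]; ext G; simp [Finset.card_eq_zero]
    rw [hΩ0] at hEf
    simp only [Finset.sum_singleton, Finset.card_singleton, Nat.cast_one, div_one] at hEf
    have hfilt : Ω.filter (fun G => a ≤ f G - Ef) = ∅ := by
      rw [hΩ0, Finset.filter_singleton, if_neg]
      rw [hEf, sub_self]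
      exact not_le.2 ha'
    rw [hfilt]
    simp only [Finset.card_empty, Nat.cast_zero, zero_div]
    exact (Real.exp_pos _).le
  have hm1 : 0 < m := Nat.pos_of_ne_zero hm0
  have ht1 : 0 < t := by
    rw [htN]
    apply div_pos _ hNR
    exact_mod_cast hm1
  obtain ⟨W, hWdef⟩ : ∃ W : ℝ, W = 6 * t * Ψ := ⟨_, rfl⟩
  have hW0 : 0 < W := by
    rw [hWdef]
    nlinarith [mul_pos ht1 hΨ0]
  obtain ⟨D, hDdef⟩ : ∃ D : ℝ, D = 24 * t * Ψ + 6 * a * B := ⟨_, rfl⟩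
  rw [← hDdef]
  have hD0 : 0 < D := by
    rw [hDdef]
    nlinarith [mul_pos ht1 hΨ0, mul_pos ha' hB0]
  have hD4W : 4 * W ≤ D := by rw [hWdef, hDdef]; nlinarith [mul_pos ha' hB0]
  have hD4aB : 4 * (a * B) ≤ D := by
    rw [hDdef]; nlinarith [mul_pos ht1 hΨ0, mul_pos ha' hB0]
  -- get the main estimate
  obtain ⟨V', hV'0, hV'W, hVL⟩ := Stmt9Aux.exists_V ψ hψ hmN hm1 f hf B hB a
  have hV'W' : V' ≤ W := by
    rw [hWdef, htN, hΨdef]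
    exact hV'W
  have hVL' : ∀ L : ℝ, 0 ≤ L → L * (2 * B) ≤ 1 →
      ((Ω.filter (fun G => a ≤ f G - Ef)).card : ℝ)
        ≤ (Ω.card : ℝ) * Real.exp (L ^ 2 * V' - L * a) := by
    intro L h1 h2
    have h := hVL L h1 h2
    rw [← hΩ] at h
    rw [← hEf] at h
    exact h
  -- numeric optimization
  rw [div_le_iff₀ hΩR]
  have hgoal : ∃ L : ℝ, 0 ≤ L ∧ L * (2 * B) ≤ 1 ∧ L ^ 2 * V' - L * a ≤ -(a^2 / D) := by
    by_cases hc : a / (2 * W) ≤ 1 / (2 * B)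
    · refine ⟨a / (2 * W), div_nonneg ha (by linarith), ?_, ?_⟩
      · have hmul := mul_le_mul_of_nonneg_right hc (by linarith : (0:ℝ) ≤ 2 * B)
        calc a / (2 * W) * (2 * B) ≤ 1 / (2 * B) * (2 * B) := hmul
          _ = 1 := one_div_mul_cancel (ne_of_gt (by linarith : (0:ℝ) < 2 * B))
      · have h1 : (a / (2 * W)) ^ 2 * V' ≤ (a / (2 * W)) ^ 2 * W :=
          mul_le_mul_of_nonneg_left hV'W' (sq_nonneg _)
        have hWne : W ≠ 0 := ne_of_gt hW0
        have h2 : (a / (2 * W)) ^ 2 * W - (a / (2 * W)) * a = -(a^2 / (4 * W)) := by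
          field_simp
          ring
        have h3 : a^2 / D ≤ a^2 / (4 * W) := by
          apply div_le_div_of_nonneg_left (sq_nonneg a) (by linarith) hD4W
        linarith
    · refine ⟨1 / (2 * B), div_nonneg zero_le_one (by linarith),
        le_of_eq (one_div_mul_cancel (ne_of_gt (by linarith : (0:ℝ) < 2 * B))), ?_⟩
      push_neg at hc
      have haB : W < a * B := by
        have hBpos2 : (0:ℝ) < 2 * B := by linarith
        have hWpos2 : (0:ℝ) < 2 * W := by linarith
        rw [div_lt_div_iff₀ hBpos2 hWpos2] at hc
        nlinarith
      have h1 : (1 / (2 * B)) ^ 2 * V' ≤ (1 / (2 * B)) ^ 2 * W :=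
        mul_le_mul_of_nonneg_left hV'W' (sq_nonneg _)
      have h2 : (1 / (2 * B)) ^ 2 * W - (1 / (2 * B)) * a
          < (1 / (2 * B)) ^ 2 * (a * B) - (1 / (2 * B)) * a := by
        refine sub_lt_sub_right (mul_lt_mul_of_pos_left haB
          (pow_pos (div_pos one_pos (by linarith)) 2)) _
      have hBne : B ≠ 0 := ne_of_gt hB0
      have h3 : (1 / (2 * B)) ^ 2 * (a * B) - (1 / (2 * B)) * a = -(a / (4 * B)) := by
        field_simp
        ring
      have h4 : a^2 / D ≤ a / (4 * B) := by
        rw [div_le_div_iff₀ hD0 (by linarith : (0:ℝ) < 4 * B)]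
        calc a ^ 2 * (4 * B) = a * (4 * (a * B)) := by ring
          _ ≤ a * D := by
            refine mul_le_mul_of_nonneg_left ?_ ha'.le
            linarith
      linarith
  obtain ⟨L, hL0, hL1, hLe⟩ := hgoal
  calc ((Ω.filter (fun G => a ≤ f G - Ef)).card : ℝ)
      ≤ (Ω.card : ℝ) * Real.exp (L ^ 2 * V' - L * a) := hVL' L hL0 hL1
    _ ≤ (Ω.card : ℝ) * Real.exp (-(a ^ 2 / D)) := by
        refine mul_le_mul_of_nonneg_left (Real.exp_le_exp.2 hLe) hΩR.le
    _ = Real.exp (-a ^ 2 / D) * (Ω.card : ℝ) := by rw [neg_div]; ring
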